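/- Let P = (p_{ij}) be an ℓ×ℓ stochastic matrix with all entries strictly positive, and let π be its unique stationary distribution (πP = π). Define, for y ∈ S_ℓ, M*(y) = sup over probability vectors u ∈ S_ℓ with all entries strictly positive of Σ_j y_j·log(u_j/(Pu)_j), where (Pu)_j = Σ_l p_{jl} u_l. Then M*(y) ≥ 0 for every y ∈ S_ℓ, M*(π) = 0, and M*(y) > 0 for every y ∈ S_ℓ with y ≠ π. -/

import Mathlib

open Real Finset

lemma aux_log_lb {x : ℝ} (hx : (1:ℝ)/2 ≤ 1 + x) : x - 2*x^2 ≤ Real.log (1+x) := by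
  have h0 : 0 < 1 + x := by linarith
  have h1 := Real.log_le_sub_one_of_pos (x := (1+x)⁻¹) (by positivity)
  rw [Real.log_inv] at h1
  have h2 : 1 - (1+x)⁻¹ ≤ Real.log (1+x) := by linarith
  have h3 : x - 2*x^2 ≤ 1 - (1+x)⁻¹ := by
    have he : 1 - (1+x)⁻¹ = x / (1+x) := by field_simp; ring
    rw [he, le_div_iff₀ h0]; nlinarith [sq_nonneg x]
  linarith

lemma aux_abs_sum_lt {ι : Type*} [Fintype ι] (a : ι → ℝ) (i j : ι)
    (hi : 0 < a i) (hj : a j < 0) : |∑ k, a k| < ∑ k, |a k| := by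
  have h1 : ∑ k, a k < ∑ k, |a k| :=
    Finset.sum_lt_sum (fun k _ => le_abs_self _)
      ⟨j, Finset.mem_univ _, lt_of_lt_of_le hj (abs_nonneg _)⟩
  have h2 : ∑ k, -a k < ∑ k, |a k| :=
    Finset.sum_lt_sum (fun k _ => neg_le_abs _)
      ⟨i, Finset.mem_univ _, by rw [abs_of_pos hi]; linarith⟩
  rw [Finset.sum_neg_distrib] at h2
  exact abs_lt.mpr ⟨by linarith, h1⟩

lemma aux_stat_unique (ℓ : ℕ) (hℓ : 0 < ℓ)
    (P : Fin ℓ → Fin ℓ → ℝ) (hPpos : ∀ i j, 0 < P i j) (hProw : ∀ i, ∑ j, P i j = 1)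
    (pi : Fin ℓ → ℝ) (hpiSum : ∑ i, pi i = 1) (hpiStat : ∀ j, ∑ i, pi i * P i j = pi j)
    (y : Fin ℓ → ℝ) (hySum : ∑ i, y i = 1) (hyStat : ∀ j, ∑ i, y i * P i j = y j) :
    y = pi := by
  by_contra hne
  set d : Fin ℓ → ℝ := fun i => y i - pi i with hd
  have hdsum : ∑ i, d i = 0 := by
    simp only [hd, Finset.sum_sub_distrib, hySum, hpiSum, sub_self]
  have hdstat : ∀ j, ∑ i, d i * P i j = d j := by
    intro j
    simp only [hd, sub_mul, Finset.sum_sub_distrib, hyStat j, hpiStat j]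
  have hdne : ∃ k, d k ≠ 0 := by
    by_contra h
    push_neg at h
    exact hne (funext fun k => by have := h k; simp [hd] at this; linarith)
  obtain ⟨k, hk⟩ := hdne
  have hpos : ∃ a, 0 < d a := by
    by_contra h
    push_neg at h
    have : ∀ i ∈ Finset.univ, d i = 0 := by
      intro i _
      have h0 : ∀ i ∈ (Finset.univ : Finset (Fin ℓ)), 0 ≤ -d i := fun i _ => by linarith [h i]
      have := (Finset.sum_eq_zero_iff_of_nonneg h0).mp (by rw [Finset.sum_neg_distrib, hdsum, neg_zero]) i (Finset.mem_univ i)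
      linarith
    exact hk (this k (Finset.mem_univ k))
  have hneg : ∃ b, d b < 0 := by
    by_contra h
    push_neg at h
    exact hk ((Finset.sum_eq_zero_iff_of_nonneg (fun i _ => h i)).mp hdsum k (Finset.mem_univ k))
  obtain ⟨a, ha⟩ := hpos
  obtain ⟨b, hb⟩ := hneg
  have key : ∀ j, |d j| < ∑ i, |d i| * P i j := by
    intro j
    have := aux_abs_sum_lt (fun i => d i * P i j) a b
      (mul_pos ha (hPpos a j)) (mul_neg_of_neg_of_pos hb (hPpos b j))
    rw [hdstat j] at this
    calc |d j| < ∑ i, |d i * P i j| := this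
      _ = ∑ i, |d i| * P i j := by
          apply Finset.sum_congr rfl; intro i _
          rw [abs_mul, abs_of_pos (hPpos i j)]
  have hlt : ∑ j, |d j| < ∑ j, ∑ i, |d i| * P i j :=
    Finset.sum_lt_sum_of_nonempty (Finset.univ_nonempty_iff.mpr ⟨⟨0, hℓ⟩⟩) (fun j _ => key j)
  rw [Finset.sum_comm] at hlt
  have : ∑ i, ∑ j, |d i| * P i j = ∑ i, |d i| := by
    apply Finset.sum_congr rfl; intro i _
    rw [← Finset.mul_sum, hProw i, mul_one]
  rw [this] at hlt
  exact lt_irrefl _ hlt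

theorem stmt10
    (ℓ : ℕ) (hℓ : 0 < ℓ)
    (P : Fin ℓ → Fin ℓ → ℝ)
    (hPpos : ∀ i j, 0 < P i j)
    (hProw : ∀ i, ∑ j, P i j = 1)
    (pi : Fin ℓ → ℝ)
    (hpiPos : ∀ i, 0 ≤ pi i)
    (hpiSum : ∑ i, pi i = 1)
    (hpiStat : ∀ j, ∑ i, pi i * P i j = pi j)
    (Mstar : (Fin ℓ → ℝ) → ℝ)
    (hM : ∀ y, Mstar y = sSup {r | ∃ u : Fin ℓ → ℝ, (∀ j, 0 < u j) ∧ (∑ j, u j = 1) ∧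
        r = ∑ j, y j * Real.log (u j / ∑ l, P j l * u l)}) :
    (∀ y : Fin ℓ → ℝ, (∀ i, 0 ≤ y i) → (∑ i, y i = 1) → 0 ≤ Mstar y)
    ∧ Mstar pi = 0
    ∧ (∀ y : Fin ℓ → ℝ, (∀ i, 0 ≤ y i) → (∑ i, y i = 1) → y ≠ pi → 0 < Mstar y) := by
  have hneF : Nonempty (Fin ℓ) := ⟨⟨0, hℓ⟩⟩
  have huniv : (Finset.univ : Finset (Fin ℓ)).Nonempty := Finset.univ_nonempty
  have hℓR : (0:ℝ) < ℓ := by exact_mod_cast hℓ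
  -- minimum entry δ
  have hpne : (Finset.univ : Finset (Fin ℓ × Fin ℓ)).Nonempty := Finset.univ_nonempty
  set δ := Finset.univ.inf' hpne (fun p : Fin ℓ × Fin ℓ => P p.1 p.2) with hδ
  have hδpos : 0 < δ := by
    rw [hδ, Finset.lt_inf'_iff]
    exact fun b _ => hPpos b.1 b.2
  have hδle : ∀ i j, δ ≤ P i j := fun i j => Finset.inf'_le _ (Finset.mem_univ (i, j))
  clear_value δ
  -- the set is bounded above
  have hbdd : ∀ y : Fin ℓ → ℝ, (∀ i, 0 ≤ y i) → (∑ i, y i = 1) →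
      BddAbove {r | ∃ u : Fin ℓ → ℝ, (∀ j, 0 < u j) ∧ (∑ j, u j = 1) ∧
        r = ∑ j, y j * Real.log (u j / ∑ l, P j l * u l)} := by
    intro y hy hysum
    refine ⟨Real.log δ⁻¹, ?_⟩
    rintro r ⟨u, hupos, husum, rfl⟩
    have huup : ∀ j, u j ≤ 1 := fun j =>
      husum ▸ Finset.single_le_sum (fun i _ => (hupos i).le) (Finset.mem_univ j)
    have hPu : ∀ j, δ ≤ ∑ l, P j l * u l := by
      intro j
      calc δ = δ * ∑ l, u l := by rw [husum, mul_one]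
        _ = ∑ l, δ * u l := by rw [Finset.mul_sum]
        _ ≤ ∑ l, P j l * u l :=
          Finset.sum_le_sum fun l _ => mul_le_mul_of_nonneg_right (hδle j l) (hupos l).le
    have key : ∀ j, Real.log (u j / ∑ l, P j l * u l) ≤ Real.log δ⁻¹ := by
      intro j
      have hApos : 0 < ∑ l, P j l * u l := lt_of_lt_of_le hδpos (hPu j)
      have hdiv : u j / (∑ l, P j l * u l) ≤ δ⁻¹ := by
        rw [div_le_iff₀ hApos]
        have h1 : δ⁻¹ * δ = 1 := inv_mul_cancel₀ hδpos.ne'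
        nlinarith [huup j, hPu j, (hupos j).le, inv_nonneg.mpr hδpos.le]
      exact Real.log_le_log (div_pos (hupos j) hApos) hdiv
    calc ∑ j, y j * Real.log (u j / ∑ l, P j l * u l)
        ≤ ∑ j, y j * Real.log δ⁻¹ :=
          Finset.sum_le_sum fun j _ => mul_le_mul_of_nonneg_left (key j) (hy j)
      _ = Real.log δ⁻¹ := by rw [← Finset.sum_mul, hysum, one_mul]
  -- 0 is in the set
  have hmem0 : ∀ y : Fin ℓ → ℝ, (0:ℝ) ∈ {r | ∃ u : Fin ℓ → ℝ, (∀ j, 0 < u j) ∧ (∑ j, u j = 1) ∧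
      r = ∑ j, y j * Real.log (u j / ∑ l, P j l * u l)} := by
    intro y
    refine ⟨fun _ => (ℓ:ℝ)⁻¹, fun j => by positivity, ?_, ?_⟩
    · rw [Finset.sum_const, Finset.card_univ, Fintype.card_fin, nsmul_eq_mul]
      exact mul_inv_cancel₀ hℓR.ne'
    · have hA : ∀ j : Fin ℓ, (∑ l, P j l * (ℓ:ℝ)⁻¹) = (ℓ:ℝ)⁻¹ := fun j => by
        rw [← Finset.sum_mul, hProw j, one_mul]
      have : ∀ j : Fin ℓ, Real.log ((ℓ:ℝ)⁻¹ / ∑ l, P j l * (ℓ:ℝ)⁻¹) = 0 := by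
        intro j
        rw [hA j, div_self (by positivity : ((ℓ:ℝ)⁻¹) ≠ 0), Real.log_one]
      simp [this]
  -- part 1
  have part1 : ∀ y : Fin ℓ → ℝ, (∀ i, 0 ≤ y i) → (∑ i, y i = 1) → 0 ≤ Mstar y := by
    intro y hy hysum
    rw [hM y]
    exact le_csSup (hbdd y hy hysum) (hmem0 y)
  -- part 2
  have part2 : Mstar pi = 0 := by
    have hub : ∀ r ∈ {r | ∃ u : Fin ℓ → ℝ, (∀ j, 0 < u j) ∧ (∑ j, u j = 1) ∧
        r = ∑ j, pi j * Real.log (u j / ∑ l, P j l * u l)}, r ≤ 0 := by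
      rintro r ⟨u, hupos, husum, rfl⟩
      have hApos : ∀ j, 0 < ∑ l, P j l * u l :=
        fun j => Finset.sum_pos (fun l _ => mul_pos (hPpos j l) (hupos l)) huniv
      have jensen : ∀ j, ∑ l, P j l * Real.log (u l) ≤ Real.log (∑ l, P j l * u l) := by
        intro j
        have h : ∀ l, P j l * (Real.log (u l) - Real.log (∑ l', P j l' * u l'))
            ≤ P j l * (u l / (∑ l', P j l' * u l') - 1) := by
          intro l
          apply mul_le_mul_of_nonneg_left _ (hPpos j l).le
          have h1 := Real.log_le_sub_one_of_pos
            (x := u l / ∑ l', P j l' * u l') (div_pos (hupos l) (hApos j))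
          rw [Real.log_div (hupos l).ne' (hApos j).ne'] at h1
          linarith
        have hsum : ∑ l, P j l * (Real.log (u l) - Real.log (∑ l', P j l' * u l'))
            ≤ ∑ l, P j l * (u l / (∑ l', P j l' * u l') - 1) :=
          Finset.sum_le_sum (fun l _ => h l)
        have e1 : ∑ l, P j l * (Real.log (u l) - Real.log (∑ l', P j l' * u l'))
            = (∑ l, P j l * Real.log (u l)) - Real.log (∑ l', P j l' * u l') := by
          simp only [mul_sub]
          rw [Finset.sum_sub_distrib, ← Finset.sum_mul, hProw j, one_mul]
        have e2 : ∑ l, P j l * (u l / (∑ l', P j l' * u l') - 1) = 0 := by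
          simp only [mul_sub, mul_one]
          rw [Finset.sum_sub_distrib, hProw j]
          have e3 : ∑ l, P j l * (u l / (∑ l', P j l' * u l'))
              = (∑ l, P j l * u l) / (∑ l', P j l' * u l') := by
            rw [Finset.sum_div]
            apply Finset.sum_congr rfl; intros; rw [mul_div_assoc]
          rw [e3, div_self (hApos j).ne', sub_self]
        rw [e1, e2] at hsum
        linarith
      calc ∑ j, pi j * Real.log (u j / ∑ l, P j l * u l)
          = ∑ j, pi j * (Real.log (u j) - Real.log (∑ l, P j l * u l)) := by
            apply Finset.sum_congr rfl; intro j _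
            rw [Real.log_div (hupos j).ne' (hApos j).ne']
        _ ≤ ∑ j, pi j * (Real.log (u j) - ∑ l, P j l * Real.log (u l)) := by
            apply Finset.sum_le_sum; intro j _
            apply mul_le_mul_of_nonneg_left _ (hpiPos j)
            have := jensen j; linarith
        _ = (∑ j, pi j * Real.log (u j)) - ∑ j, pi j * ∑ l, P j l * Real.log (u l) := by
            rw [← Finset.sum_sub_distrib]
            apply Finset.sum_congr rfl; intros; ring
        _ = 0 := by
            have hdd : ∑ j, pi j * ∑ l, P j l * Real.log (u l)
                = ∑ l, pi l * Real.log (u l) := by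
              calc ∑ j, pi j * ∑ l, P j l * Real.log (u l)
                  = ∑ j, ∑ l, pi j * P j l * Real.log (u l) := by
                    apply Finset.sum_congr rfl; intro j _
                    rw [Finset.mul_sum]; apply Finset.sum_congr rfl; intros; ring
                _ = ∑ l, ∑ j, pi j * P j l * Real.log (u l) := Finset.sum_comm
                _ = ∑ l, (∑ j, pi j * P j l) * Real.log (u l) := by
                    apply Finset.sum_congr rfl; intros; rw [Finset.sum_mul]
                _ = ∑ l, pi l * Real.log (u l) := by
                    apply Finset.sum_congr rfl; intro l _; rw [hpiStat l]
            rw [hdd, sub_self]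
    rw [hM pi]
    exact le_antisymm (Real.sSup_le hub le_rfl)
      (le_csSup (hbdd pi hpiPos hpiSum) (hmem0 pi))
  -- part 3
  have part3 : ∀ y : Fin ℓ → ℝ, (∀ i, 0 ≤ y i) → (∑ i, y i = 1) → y ≠ pi → 0 < Mstar y := by
    intro y hy hysum hyne
    rw [hM y]
    set g : Fin ℓ → ℝ := fun k => y k - ∑ j, y j * P j k with hg
    clear_value g
    have hgne : ∃ k, g k ≠ 0 := by
      by_contra h; push_neg at h
      apply hyne
      apply aux_stat_unique ℓ hℓ P hPpos hProw pi hpiSum hpiStat y hysum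
      intro j
      have := h j
      simp only [hg] at this
      linarith
    obtain ⟨k0, hk0⟩ := hgne
    have hG : 0 < ∑ k, g k ^ 2 :=
      Finset.sum_pos' (fun k _ => sq_nonneg _) ⟨k0, Finset.mem_univ _, by positivity⟩
    have hgsum : ∑ k, g k = 0 := by
      have hdbl : ∑ k, ∑ j, y j * P j k = 1 := by
        rw [Finset.sum_comm]
        calc ∑ j, ∑ k, y j * P j k = ∑ j, y j * ∑ k, P j k := by
              apply Finset.sum_congr rfl; intros; rw [Finset.mul_sum]
          _ = ∑ j, y j := by
              apply Finset.sum_congr rfl; intro j _; rw [hProw j, mul_one]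
          _ = 1 := hysum
      simp only [hg, Finset.sum_sub_distrib, hysum, hdbl, sub_self]
    set C : ℝ := 1 + ∑ k, |g k| with hC
    have habs_nn : (0:ℝ) ≤ ∑ k, |g k| := Finset.sum_nonneg fun k _ => abs_nonneg _
    have hCpos : 0 < C := by rw [hC]; linarith
    have hC1 : 1 ≤ C := by rw [hC]; linarith
    clear_value C
    have hgC : ∀ k, |g k| ≤ C := fun k => by
      have := Finset.single_le_sum (f := fun k => |g k|) (fun i _ => abs_nonneg _) (Finset.mem_univ k)
      rw [hC]; linarith
    have hPle1 : ∀ i j, P i j ≤ 1 := fun i j =>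
      (hProw i) ▸ Finset.single_le_sum (fun l _ => (hPpos i l).le) (Finset.mem_univ j)
    set Pg : Fin ℓ → ℝ := fun j => ∑ l, P j l * g l with hPg
    clear_value Pg
    have hPgC : ∀ j, |Pg j| ≤ C := by
      intro j
      calc |Pg j| = |∑ l, P j l * g l| := by rw [hPg]
        _ ≤ ∑ l, |P j l * g l| := Finset.abs_sum_le_sum_abs _ _
        _ ≤ ∑ l, |g l| := by
            apply Finset.sum_le_sum; intro l _
            rw [abs_mul, abs_of_pos (hPpos j l)]
            nlinarith [abs_nonneg (g l), hPle1 j l, (hPpos j l).le]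
        _ ≤ C := by rw [hC]; linarith
    set t : ℝ := 1 / (4 * C) with ht
    have htpos : 0 < t := by rw [ht]; positivity
    have htC : t * C = 1/4 := by rw [ht]; field_simp
    clear_value t
    have ht4 : t ≤ 1/4 := by nlinarith [mul_le_mul_of_nonneg_left hC1 htpos.le, htC]
    have hb : ∀ x : ℝ, |x| ≤ C → (1:ℝ)/2 ≤ 1 + t * x := by
      intro x hx
      have h1 := mul_le_mul_of_nonneg_left (neg_abs_le x) htpos.le
      rw [mul_neg] at h1
      have h2 := mul_le_mul_of_nonneg_left hx htpos.le
      linarith [htC]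
    set u : Fin ℓ → ℝ := fun j => (1 + t * g j) / ℓ with hu
    clear_value u
    have hupos : ∀ j, 0 < u j := by
      intro j
      have h1 : (0:ℝ) < 1 + t * g j := by linarith [hb (g j) (hgC j)]
      simp only [hu]
      exact div_pos h1 hℓR
    have husum : ∑ j, u j = 1 := by
      simp only [hu]
      have e : ∑ j, (1 + t * g j) = (ℓ:ℝ) := by
        rw [Finset.sum_add_distrib, ← Finset.mul_sum, hgsum, mul_zero, add_zero,
          Finset.sum_const, Finset.card_univ, Fintype.card_fin, nsmul_eq_mul, mul_one]
      rw [← Finset.sum_div, e, div_self hℓR.ne']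
    have hPuEq : ∀ j, (∑ l, P j l * u l) = (1 + t * Pg j) / ℓ := by
      intro j
      simp only [hu]
      have e0 : ∀ l, P j l * ((1 + t * g l) / (ℓ:ℝ)) = (P j l * (1 + t * g l)) / ℓ :=
        fun l => by rw [mul_div_assoc]
      rw [Finset.sum_congr rfl (fun l _ => e0 l), ← Finset.sum_div]
      congr 1
      calc ∑ l, P j l * (1 + t * g l) = ∑ l, (P j l + t * (P j l * g l)) := by
            apply Finset.sum_congr rfl; intros; ring
        _ = 1 + t * Pg j := by
            rw [Finset.sum_add_distrib, hProw j, ← Finset.mul_sum, hPg]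
    have hlog : ∀ j, Real.log (u j / ∑ l, P j l * u l)
        = Real.log (1 + t * g j) - Real.log (1 + t * Pg j) := by
      intro j
      have h1 : 0 < 1 + t * g j := by linarith [hb (g j) (hgC j)]
      have h2 : 0 < 1 + t * Pg j := by linarith [hb (Pg j) (hPgC j)]
      rw [hPuEq j]
      have he : u j / ((1 + t * Pg j) / ℓ) = (1 + t * g j) / (1 + t * Pg j) := by
        simp only [hu]
        rw [div_div_div_eq, mul_comm ((ℓ:ℝ)) (1 + t * Pg j), mul_div_mul_right _ _ hℓR.ne']
      rw [he, Real.log_div h1.ne' h2.ne']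
    have hmem : (∑ j, y j * Real.log (u j / ∑ l, P j l * u l)) ∈
        {r | ∃ u : Fin ℓ → ℝ, (∀ j, 0 < u j) ∧ (∑ j, u j = 1) ∧
          r = ∑ j, y j * Real.log (u j / ∑ l, P j l * u l)} :=
      ⟨u, hupos, husum, rfl⟩
    refine lt_of_lt_of_le ?_ (le_csSup (hbdd y hy hysum) hmem)
    have hlb : ∀ j, (t * g j - 2*(t * g j)^2) - t * Pg j
        ≤ Real.log (u j / ∑ l, P j l * u l) := by
      intro j
      rw [hlog j]
      have h1 := aux_log_lb (x := t * g j) (hb (g j) (hgC j))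
      have h2 := Real.log_le_sub_one_of_pos (x := 1 + t * Pg j)
        (by linarith [hb (Pg j) (hPgC j)])
      linarith
    have hy1 : ∀ j, y j ≤ 1 := fun j =>
      hysum ▸ Finset.single_le_sum (fun i _ => hy i) (Finset.mem_univ j)
    have hyg2 : ∑ j, y j * g j ^ 2 ≤ ∑ j, g j ^ 2 :=
      Finset.sum_le_sum fun j _ => by nlinarith [hy j, hy1 j, sq_nonneg (g j)]
    have hyg2nn : 0 ≤ ∑ j, y j * g j ^ 2 :=
      Finset.sum_nonneg fun j _ => mul_nonneg (hy j) (sq_nonneg _)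
    have hkey : ∑ j, y j * Pg j = (∑ j, y j * g j) - ∑ j, g j ^ 2 := by
      have step : ∑ j, y j * Pg j = ∑ l, (y l - g l) * g l := by
        calc ∑ j, y j * Pg j = ∑ j, ∑ l, y j * P j l * g l := by
              apply Finset.sum_congr rfl; intro j _
              simp only [hPg]
              rw [Finset.mul_sum]; apply Finset.sum_congr rfl; intros; ring
          _ = ∑ l, ∑ j, y j * P j l * g l := Finset.sum_comm
          _ = ∑ l, (∑ j, y j * P j l) * g l := by
              apply Finset.sum_congr rfl; intros; rw [Finset.sum_mul]
          _ = ∑ l, (y l - g l) * g l := by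
              apply Finset.sum_congr rfl; intro l _
              have : ∑ j, y j * P j l = y l - g l := by simp only [hg]; ring
              rw [this]
      rw [step, ← Finset.sum_sub_distrib]
      apply Finset.sum_congr rfl; intros; ring
    have hLHS : ∑ j, y j * ((t * g j - 2*(t * g j)^2) - t * Pg j)
        = t * (∑ j, g j ^ 2) - 2*t^2 * ∑ j, y j * g j ^ 2 := by
      have e : ∀ j, y j * ((t * g j - 2*(t * g j)^2) - t * Pg j)
          = t * (y j * g j) - t * (y j * Pg j) - 2*t^2 * (y j * g j ^ 2) := fun j => by ring
      rw [Finset.sum_congr rfl (fun j _ => e j)]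
      rw [Finset.sum_sub_distrib, Finset.sum_sub_distrib,
        ← Finset.mul_sum, ← Finset.mul_sum, ← Finset.mul_sum, hkey]
      ring
    have hpos : 0 < ∑ j, y j * ((t * g j - 2*(t * g j)^2) - t * Pg j) := by
      rw [hLHS]
      nlinarith [mul_le_mul_of_nonneg_left hyg2 (mul_nonneg (by norm_num : (0:ℝ) ≤ 2) (sq_nonneg t)),
        mul_pos htpos hG,
        mul_le_mul_of_nonneg_right ht4 (mul_pos htpos hG).le]
    calc (0:ℝ) < ∑ j, y j * ((t * g j - 2*(t * g j)^2) - t * Pg j) := hpos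
      _ ≤ ∑ j, y j * Real.log (u j / ∑ l, P j l * u l) :=
          Finset.sum_le_sum fun j _ => mul_le_mul_of_nonneg_left (hlb j) (hy j)
  exact ⟨part1, part2, part3⟩
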